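/- Let A be a unital C*-algebra with triple product {x,y,z} = (xy*z + zy*x)/2 and Jordan product x∘y = (xy + yx)/2, and let P : A → A be a contractive linear projection satisfying the conditional expectation formulas P{Px,Py,Pz} = P{Px,y,Pz} = P{x,Py,Pz} for all x,y,z ∈ A, whose range is a *-subalgebra of A (closed under multiplication and adjoint) with unit e = P(1). Then for every x ∈ A, 0 ≤ P((P(x) − x)∘(P(x) − x)*) = P(x∘x*) − P(x)∘P(x)*; in particular the Schwarz-type inequality P(x)P(x)* + P(x)*P(x) ≤ P(xx* + x*x) holds for all x ∈ A. -/
import Mathlib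

variable {A : Type*} [CStarAlgebra A]

/-- The Jordan triple product `{x,y,z} = (xy*z + zy*x)/2` of a C*-algebra. -/
noncomputable def tp (x y z : A) : A := (2:ℂ)⁻¹ • (x * star y * z + z * star y * x)

/-- The Jordan product `x∘y = (xy + yx)/2` of a C*-algebra. -/
noncomputable def jp (x y : A) : A := (2:ℂ)⁻¹ • (x * y + y * x)

theorem stmt_13 [PartialOrder A] [StarOrderedRing A] (P : A →ₗ[ℂ] A)
    (hproj : ∀ x, P (P x) = P x)
    (hcontr : ∀ x, ‖P x‖ ≤ ‖x‖)
    (hce1 : ∀ x y z : A, P (tp (P x) (P y) (P z)) = P (tp (P x) y (P z)))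
    (hce2 : ∀ x y z : A, P (tp (P x) (P y) (P z)) = P (tp x (P y) (P z)))
    (hmul : ∀ x ∈ Set.range P, ∀ y ∈ Set.range P, x * y ∈ Set.range P)
    (hstar : ∀ x ∈ Set.range P, star x ∈ Set.range P)
    (heunit : ∀ x ∈ Set.range P, P 1 * x = x ∧ x * P 1 = x) :
    ∀ x : A,
      (0 ≤ P (jp (P x - x) (star (P x - x)))) ∧
      (P (jp (P x - x) (star (P x - x))) = P (jp x (star x)) - jp (P x) (star (P x))) ∧
      (P x * star (P x) + star (P x) * P x ≤ P (x * star x + star x * x)) := by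
  set e : A := P 1 with he
  have hfix : ∀ u : A, u ∈ Set.range P → P u = u := by
    rintro u ⟨w, rfl⟩; exact hproj w
  have hePmem : e ∈ Set.range P := ⟨1, rfl⟩
  have hPxmem : ∀ x : A, P x ∈ Set.range P := fun x => ⟨x, rfl⟩
  have hL : ∀ u ∈ Set.range P, e * u = u := fun u hu => (heunit u hu).1
  have hR : ∀ u ∈ Set.range P, u * e = u := fun u hu => (heunit u hu).2
  -- e is a self-adjoint idempotent
  have hestar : star e = e := by
    have h1 : e * star e = star e := hL _ (hstar e hePmem)
    have h2 : e * star e = e := by simpa using congrArg star h1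
    rw [← h1, h2]
  have hee : e * e = e := hL e hePmem
  have half_ne : (2:ℂ)⁻¹ ≠ 0 := by norm_num
  have hdup : ∀ u : A, (2:ℂ)⁻¹ • (u + u) = u := by
    intro u; rw [← two_smul ℂ, smul_smul]; norm_num
  have hjpmem : ∀ a b : A, jp (P a) (star (P b)) ∈ Set.range P := by
    intro a b
    have h1 : star (P b) ∈ Set.range P := hstar _ (hPxmem b)
    obtain ⟨u, hu⟩ := hmul (P a) (hPxmem a) _ h1
    obtain ⟨v, hv⟩ := hmul _ h1 (P a) (hPxmem a)
    exact ⟨(2:ℂ)⁻¹ • (u + v), by rw [jp, map_smul, map_add, hu, hv]⟩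
  -- Step A : halving identity
  have hA : ∀ x : A, P ((2:ℂ)⁻¹ • (x * e + e * x)) = P x := by
    intro x
    have h := hce2 x 1 1
    have t1 : P x * star e * e = P x := by
      rw [hestar, hR _ (hPxmem x), hR _ (hPxmem x)]
    have t2 : e * star e * P x = P x := by
      rw [hestar, hee, hL _ (hPxmem x)]
    have h1 : tp (P x) (P 1) (P 1) = P x := by
      rw [tp, ← he, t1, t2, hdup]
    have t3 : x * star e * e = x * e := by
      rw [hestar, mul_assoc, hee]
    have t4 : e * star e * x = e * x := by
      rw [hestar, hee]
    have h2 : tp x (P 1) (P 1) = (2:ℂ)⁻¹ • (x * e + e * x) := by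
      rw [tp, ← he, t3, t4]
    rw [h1, h2, hproj] at h
    exact h.symm
  -- Step B : P (e x e) = P x
  have hB : ∀ x : A, P (e * x * e) = P x := by
    intro x
    have h1 := hA ((2:ℂ)⁻¹ • (x * e + e * x))
    have hsum : (x * e + e * x) * e + e * (x * e + e * x)
        = (x * e + e * x) + (e * x * e + e * x * e) := by
      rw [add_mul, mul_add, mul_assoc x e e, hee, ← mul_assoc e e x, hee, ← mul_assoc e x e]
      abel
    have h2 : ((2:ℂ)⁻¹ • (((2:ℂ)⁻¹ • (x * e + e * x)) * e + e * ((2:ℂ)⁻¹ • (x * e + e * x))))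
        = (2:ℂ)⁻¹ • ((2:ℂ)⁻¹ • (x * e + e * x)) + (2:ℂ)⁻¹ • (e * x * e) := by
      rw [smul_mul_assoc, mul_smul_comm, ← smul_add, hsum, smul_add, hdup, smul_add]
    rw [hA x] at h1
    rw [h2, map_add, map_smul, map_smul] at h1
    have hs : (2:ℂ)⁻¹ • P (x * e + e * x) = P x := by rw [← map_smul, hA x]
    rw [hs] at h1
    have h3 : (2:ℂ)⁻¹ • P (e * x * e) = (2:ℂ)⁻¹ • P x := by
      rw [← map_smul]
      have h4 : P ((2:ℂ)⁻¹ • (e * x * e)) = P x - (2:ℂ)⁻¹ • P x :=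
        eq_sub_of_add_eq' h1
      rw [h4]; module
    exact smul_right_injective A half_ne h3
  -- Step C : P commutes with star
  have hC : ∀ x : A, P (star x) = star (P x) := by
    intro x
    have h := hce1 1 x 1
    have h1 : tp (P 1) (P x) (P 1) = star (P x) := by
      rw [tp, ← he, mul_assoc, hR _ (hstar _ (hPxmem x)), hL _ (hstar _ (hPxmem x)), hdup]
    have h2 : tp (P 1) x (P 1) = e * star x * e := by
      rw [tp, ← he, hdup]
    rw [h1, h2, hB (star x), hfix _ (hstar _ (hPxmem x))] at h
    exact h.symm
  -- Step D : conditional expectation for the Jordan product, raw first slot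
  have hD : ∀ x y : A, P (jp x (star (P y))) = jp (P x) (star (P y)) := by
    intro x y
    have h := hce2 x y 1
    have hsy : star (P y) ∈ Set.range P := hstar _ (hPxmem y)
    have h1 : tp (P x) (P y) (P 1) = jp (P x) (star (P y)) := by
      rw [tp, jp, ← he, mul_assoc, hR _ hsy, hL _ hsy]
    have h2 : tp x (P y) (P 1) = jp x (star (P y)) := by
      rw [tp, jp, ← he, mul_assoc, hR _ hsy, hL _ hsy]
    rw [h1, h2] at h
    rw [← h, hfix _ (hjpmem x y)]
  -- star of a Jordan product
  have hjpstar : ∀ u v : A, star (jp u (star v)) = jp v (star u) := by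
    intro u v
    rw [jp, jp, star_smul, star_add, star_mul, star_mul, star_star,
      show (star ((2:ℂ)⁻¹) : ℂ) = (2:ℂ)⁻¹ by simp, add_comm]
  -- Step E : conditional expectation for the Jordan product, raw second slot
  have hE : ∀ x y : A, P (jp (P y) (star x)) = jp (P y) (star (P x)) := by
    intro x y
    rw [← hjpstar x (P y), hC, hD, hjpstar]
  -- positivity of P
  have hone : (0:A) ≤ 1 := by simpa using star_mul_self_nonneg (1:A)
  have hPpos : ∀ w : A, 0 ≤ w → 0 ≤ P w := by
    intro w hw
    have hwsa : IsSelfAdjoint w := .of_nonneg hw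
    set t : ℝ := ‖w‖ with ht
    have ht0 : (0:ℝ) ≤ t := norm_nonneg w
    have hle : w ≤ algebraMap ℝ A t := hwsa.le_algebraMap_norm_self
    set d : A := algebraMap ℝ A t - w with hd
    have hd0 : 0 ≤ d := sub_nonneg.2 hle
    have hdle : d ≤ algebraMap ℝ A t := by
      rw [hd]; simpa using sub_le_self (algebraMap ℝ A t) hw
    have hnormd : ‖d‖ ≤ t := (CStarAlgebra.norm_le_iff_le_algebraMap d ht0 hd0).2 hdle
    have halg : ∀ s : ℝ, (algebraMap ℝ A s) = (s:ℂ) • (1:A) := by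
      intro s; rw [Algebra.algebraMap_eq_smul_one, Complex.coe_smul]
    have hPd : P d = (t:ℂ) • e - P w := by
      rw [hd, map_sub, halg, map_smul, ← he]
    have hnPd : ‖P d‖ ≤ t := (hcontr d).trans hnormd
    have hsaPw : IsSelfAdjoint (P w) := by
      rw [IsSelfAdjoint, ← hC, hwsa.star_eq]
    have hsaPd : IsSelfAdjoint (P d) := by
      rw [hPd, IsSelfAdjoint, star_sub, hsaPw.star_eq, star_smul, hestar,
        show (star ((t:ℝ):ℂ) : ℂ) = ((t:ℝ):ℂ) by simp]
    have hmono : algebraMap ℝ A ‖P d‖ ≤ algebraMap ℝ A t := by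
      have h5 : (0:A) ≤ algebraMap ℝ A t - algebraMap ℝ A ‖P d‖ := by
        rw [← map_sub, Algebra.algebraMap_eq_smul_one]
        exact smul_nonneg (sub_nonneg.2 hnPd) hone
      exact sub_nonneg.mp h5
    have hcle : P d ≤ algebraMap ℝ A t := hsaPd.le_algebraMap_norm_self.trans hmono
    have h5 : (0:A) ≤ algebraMap ℝ A t - P d := sub_nonneg.2 hcle
    have h6 := star_left_conjugate_nonneg h5 e
    rw [hestar] at h6
    have hX : algebraMap ℝ A t - P d = P w + ((t:ℂ) • (1:A) - (t:ℂ) • e) := by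
      rw [hPd, halg]; abel
    have h7 : e * (algebraMap ℝ A t - P d) * e = P w := by
      rw [hX, mul_add, add_mul, mul_sub, sub_mul, mul_smul_comm, smul_mul_assoc,
        mul_one, mul_smul_comm, smul_mul_assoc, hee, hL _ (hPxmem w), hR _ (hPxmem w), hee]
      simp
    rwa [h7] at h6
  -- main goals
  intro x
  have hv : (0:A) ≤ (P x - x) * star (P x - x) + star (P x - x) * (P x - x) :=
    add_nonneg (mul_star_self_nonneg _) (star_mul_self_nonneg _)
  have hpos : 0 ≤ P (jp (P x - x) (star (P x - x))) := by
    rw [jp, map_smul, show ((2:ℂ)⁻¹) = (((2:ℝ)⁻¹ : ℝ) : ℂ) by norm_num, Complex.coe_smul]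
    exact smul_nonneg (by norm_num) (hPpos _ hv)
  have hexp : jp (P x - x) (star (P x - x))
      = jp (P x) (star (P x)) - jp (P x) (star x) - jp x (star (P x)) + jp x (star x) := by
    simp only [jp, star_sub, mul_sub, sub_mul, smul_sub, smul_add]
    abel
  have heq : P (jp (P x - x) (star (P x - x))) = P (jp x (star x)) - jp (P x) (star (P x)) := by
    rw [hexp, map_add, map_sub, map_sub, hfix _ (hjpmem x x), hE x x, hD x x]
    abel
  refine ⟨hpos, heq, ?_⟩
  have hdiff : 0 ≤ P (jp x (star x)) - jp (P x) (star (P x)) := heq ▸ hpos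
  rw [← sub_nonneg]
  have h9 : P (x * star x + star x * x) - (P x * star (P x) + star (P x) * P x)
      = (P (jp x (star x)) - jp (P x) (star (P x)))
        + (P (jp x (star x)) - jp (P x) (star (P x))) := by
    rw [jp, jp, map_smul]
    module
  rw [h9]
  exact add_nonneg hdiff hdiff
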